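/- Let p be an odd prime, let r be an integer with 0 ≤ r ≤ p-1, let u ∈ F_p and α ∈ F_p^×, let E be a field of characteristic p, and let β ∈ E be an element with β² equal to the image of α in E. Then t_r(u,α) = -(-1)^{p-1-r} · 2^{p-1-r} · β^{p-1-r} · P̄_{p-1-r}(u·β^{-1}) in E, where t_r(u,α) is viewed in E via the embedding of F_p. -/

import Mathlib

open Polynomial

/-- The mod-`p` reduction of the `r`-th Legendre polynomial
`P_r(X) = 2^{-r} · Σ_{k=0}^{⌊r/2⌋} (-1)^k · C(r,k) · C(2r-2k, r) · X^{r-2k}`,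
defined directly over any field `E` (intended: of odd characteristic). -/
noncomputable def legendreMod (E : Type*) [Field E] (r : ℕ) : E[X] :=
  C (((2 : E) ^ r)⁻¹) * ∑ k ∈ Finset.range (r / 2 + 1),
    C ((-1 : E) ^ k * (r.choose k : E) * (((2 * r - 2 * k).choose r : ℕ) : E)) * X ^ (r - 2 * k)

/-- `t_r(u,α) = - Σ_{j ∈ S_{p-1-r}} (-1)^{(p-1-r-j)/2} · C(p-1-r,(p-1-r-j)/2) · C(r,j)
· α^{(p-1-r-j)/2} · u^j` where `S_{p-1-r}` is the set of `0 ≤ j ≤ p-1-r` of the same parity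
as `p-1-r`. -/
def tCoef (p r : ℕ) (u α : ZMod p) : ZMod p :=
  - ∑ j ∈ (Finset.range (p - 1 - r + 1)).filter (fun j => j % 2 = (p - 1 - r) % 2),
    (-1) ^ ((p - 1 - r - j) / 2) * ((p - 1 - r).choose ((p - 1 - r - j) / 2) : ZMod p) *
      (r.choose j : ZMod p) * α ^ ((p - 1 - r - j) / 2) * u ^ j

/-- For an odd prime `p`, `0 ≤ r ≤ p-1`, `u ∈ F_p`, `α ∈ F_p^×`, a field `E` of characteristic
`p` and `β ∈ E` with `β² = α`, one has
`t_r(u,α) = -(-1)^{p-1-r} · 2^{p-1-r} · β^{p-1-r} · P̄_{p-1-r}(u·β⁻¹)` in `E`. -/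
lemma cast_choose_sub (p : ℕ) [hp : Fact p.Prime] (a b : ℕ) (hab : a + b ≤ p - 1) :
    (((p - 1 - a).choose b : ℕ) : ZMod p) = (-1) ^ b * (((a + b).choose b : ℕ) : ZMod p) := by
  have hpp := hp.out
  have hp2 := hpp.two_le
  have hb : b < p := by omega
  have hfac : ((b.factorial : ℕ) : ZMod p) ≠ 0 := by
    rw [Ne, ZMod.natCast_eq_zero_iff]
    intro h
    exact absurd (hpp.dvd_factorial.mp h) (by omega)
  apply mul_right_cancel₀ hfac
  have h1 : (((p - 1 - a).descFactorial b : ℕ) : ZMod p)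
      = (-1) ^ b * (((a + b).descFactorial b : ℕ) : ZMod p) := by
    rw [Nat.descFactorial_eq_prod_range, Nat.descFactorial_eq_prod_range,
      Nat.cast_prod, Nat.cast_prod]
    have h2 : ∀ i ∈ Finset.range b, ((p - 1 - a - i : ℕ) : ZMod p)
        = (-1) * (((a + b - (b - 1 - i) : ℕ)) : ZMod p) := by
      intro i hi
      simp only [Finset.mem_range] at hi
      have e1 : p - 1 - a - i = p - (a + b - (b - 1 - i)) := by omega
      rw [e1, Nat.cast_sub (by omega)]
      rw [ZMod.natCast_self, zero_sub, neg_eq_neg_one_mul]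
    rw [Finset.prod_congr rfl h2]
    rw [Finset.prod_mul_distrib, Finset.prod_const, Finset.card_range]
    congr 1
    exact Finset.prod_range_reflect (fun i => ((a + b - i : ℕ) : ZMod p)) b
  rw [mul_assoc]
  calc (((p - 1 - a).choose b : ℕ) : ZMod p) * ((b.factorial : ℕ) : ZMod p)
      = (((p - 1 - a).descFactorial b : ℕ) : ZMod p) := by
        rw [Nat.descFactorial_eq_factorial_mul_choose]; push_cast; ring
    _ = (-1) ^ b * (((a + b).descFactorial b : ℕ) : ZMod p) := h1
    _ = (-1) ^ b * ((((a + b).choose b : ℕ) : ZMod p) * ((b.factorial : ℕ) : ZMod p)) := by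
        rw [Nat.descFactorial_eq_factorial_mul_choose]; push_cast; ring

lemma cast_choose_key (p : ℕ) [hp : Fact p.Prime] (m j : ℕ) (hj : j ≤ m) (hm : m ≤ p - 1) :
    (((p - 1 - m).choose j : ℕ) : ZMod p) = (-1) ^ j * (((m + j).choose j : ℕ) : ZMod p) := by
  have hpp := hp.out
  have hp2 := hpp.two_le
  by_cases h : m + j ≤ p - 1
  · exact cast_choose_sub p m j h
  · have h0 : (p - 1 - m).choose j = 0 := Nat.choose_eq_zero_of_lt (by omega)
    have h1 : p ∣ (m + j).choose j := by
      have := (Nat.Prime.dvd_choose_add (hp := hpp)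
        (a := j) (b := m) (by omega) (by omega) (by omega))
      rwa [Nat.add_comm j m] at this
    rw [h0, (ZMod.natCast_eq_zero_iff _ _).mpr h1]
    simp


theorem tCoef_eq_legendre (p : ℕ) [Fact p.Prime] (hodd : Odd p)
    (r : ℕ) (hr : r ≤ p - 1) (u α : ZMod p) (hα : α ≠ 0)
    (E : Type*) [Field E] [CharP E p] (β : E)
    (hβ : β ^ 2 = ZMod.castHom dvd_rfl E α) :
    ZMod.castHom dvd_rfl E (tCoef p r u α) =
      - ((-1) ^ (p - 1 - r) * 2 ^ (p - 1 - r) * β ^ (p - 1 - r) *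
        Polynomial.eval (ZMod.castHom dvd_rfl E u * β⁻¹) (legendreMod E (p - 1 - r))) := by
  have hpp : p.Prime := Fact.out
  have hp2 : 2 ≤ p := hpp.two_le
  have hp3 : 3 ≤ p := by
    rcases hodd with ⟨k, hk⟩
    omega
  set m := p - 1 - r with hm
  have hmle : m ≤ p - 1 := by omega
  have hrm : p - 1 - m = r := by omega
  have hβ0 : β ≠ 0 := by
    intro h
    apply hα
    apply RingHom.injective (ZMod.castHom dvd_rfl E)
    rw [map_zero, ← hβ, h]
    ring
  have h2 : (2 : E) ≠ 0 := by
    intro h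
    have hd : (p : ℕ) ∣ 2 := (CharP.cast_eq_zero_iff E p 2).mp (by exact_mod_cast h)
    have := Nat.le_of_dvd (by norm_num) hd
    omega
  have h2m : (2 : E) ^ m ≠ 0 := pow_ne_zero _ h2
  rw [tCoef, map_neg, map_sum, legendreMod, eval_mul, eval_C, eval_finset_sum]
  simp only [eval_mul, eval_C, eval_pow, eval_X]
  rw [neg_inj]
  simp only [Finset.mul_sum]
  refine Finset.sum_nbij' (fun j => (m - j) / 2) (fun k => m - 2 * k) ?_ ?_ ?_ ?_ ?_
  · intro j hj
    simp only [Finset.mem_filter, Finset.mem_range] at hj ⊢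
    omega
  · intro k hk
    simp only [Finset.mem_filter, Finset.mem_range] at hk ⊢
    omega
  · intro j hj
    simp only [Finset.mem_filter, Finset.mem_range] at hj
    show m - 2 * ((m - j) / 2) = j
    omega
  · intro k hk
    simp only [Finset.mem_range] at hk
    show (m - (m - 2 * k)) / 2 = k
    omega
  · intro j hj
    simp only [Finset.mem_filter, Finset.mem_range] at hj
    obtain ⟨hjm', hjpar⟩ := hj
    have hjm : j ≤ m := by omega
    set k := (m - j) / 2 with hk
    have hmk : m - 2 * k = j := by omega
    have hmjk : m = j + 2 * k := by omega
    have h2m2k : 2 * m - 2 * k = m + j := by omega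
    simp only [map_mul, map_pow, map_neg, map_one, map_natCast]
    rw [hmk, h2m2k]
    have hkey : ((r.choose j : ℕ) : E) = (-1) ^ j * (((m + j).choose j : ℕ) : E) := by
      have := cast_choose_key p m j hjm hmle
      rw [hrm] at this
      have h3 := congrArg (ZMod.castHom dvd_rfl E) this
      rw [map_mul, map_pow, map_neg, map_one, map_natCast, map_natCast] at h3
      exact h3
    rw [hkey, Nat.choose_symm_add]
    have hsign : ((-1 : E)) ^ m = (-1) ^ j := by
      rw [hmjk, pow_add, pow_mul]
      norm_num
    have hβm : β ^ m = β ^ j * (ZMod.castHom dvd_rfl E α) ^ k := by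
      rw [hmjk, pow_add, pow_mul, hβ]
    rw [hsign, hβm]
    field_simp
    rw [← hm, div_pow, mul_div_assoc', eq_div_iff (pow_ne_zero _ hβ0)]
    ring
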